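/- For any alphabet size q ≥ 2 and any i ∈ {1, ..., q-1}, no infinite family of q-ary codes of positive rate can be list-decoded (with polynomially bounded list size) from a δ = (q-i)/q fraction of deletions combined with a γ = i(i-1)/q fraction of insertions: an adversary can transform any codeword of length n into a fixed string depending only on an i-element subset of the alphabet, using at most δn deletions and γn insertions, so the number of distinguishable received strings is O_q(1)·|Σ_target strings|, forcing rate → 0. -/

import Mathlib

variable {α : Type*}

/-- Insertion-deletion edit distance. -/
def ED [DecidableEq α] : List α → List α → ℕ
  | [], ys => ys.length
  | _ :: xs, [] => xs.length + 1
  | x :: xs, y :: ys =>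
    if x = y then ED xs ys
    else 1 + min (ED (x :: xs) ys) (ED xs (y :: ys))
termination_by xs ys => xs.length + ys.length
decreasing_by all_goals (simp; try omega)

/-- Length of longest common subsequence. -/
def LCSlen [DecidableEq α] : List α → List α → ℕ
  | [], _ => 0
  | _ :: _, [] => 0
  | x :: xs, y :: ys =>
    if x = y then 1 + LCSlen xs ys
    else max (LCSlen (x :: xs) ys) (LCSlen xs (y :: ys))
termination_by xs ys => xs.length + ys.length
decreasing_by all_goals (simp; try omega)

/-- substring S[i, j) of an (infinite) string -/
def sub (S : ℕ → α) (i j : ℕ) : List α := (List.range' i (j - i)).map S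

def IsSyncString [DecidableEq α] (ε : ℝ) (n : ℕ) (S : ℕ → α) : Prop :=
  ∀ i j k : ℕ, i < j → j < k → k ≤ n →
    (1 - ε) * ((k : ℝ) - i) < ED (sub S i j) (sub S j k)

def ReachableR (c y : List α) (D G : ℝ) : Prop :=
  ∃ z : List α, z.Sublist c ∧ z.Sublist y ∧
    (c.length : ℝ) - z.length ≤ D ∧ (y.length : ℝ) - z.length ≤ G

/-- Any list with entries in `s` and length ≤ `m` is a sublist of `m` copies of `s` joined. -/
lemma sublist_flatten_replicate [DecidableEq α] (z : List α) :
    ∀ (m : ℕ) (s : List α), (∀ a ∈ z, a ∈ s) → z.length ≤ m →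
      z.Sublist (List.replicate m s).flatten := by
  induction z with
  | nil => intro m s _ _; exact List.nil_sublist _
  | cons a z ih =>
    intro m s hz hl
    match m with
    | 0 => simp at hl
    | m + 1 =>
      obtain ⟨s1, s2, hs⟩ := List.append_of_mem (hz a (by simp))
      have hl' : z.length ≤ m := by simp at hl; omega
      have h1 : z.Sublist (List.replicate m s).flatten :=
        ih m s (fun b hb => hz b (by simp [hb])) hl'
      have h2 : (a :: z).Sublist (a :: (s2 ++ (List.replicate m s).flatten)) :=
        (h1.trans (List.sublist_append_right _ _)).cons₂ a
      have heq : (List.replicate (m+1) s).flatten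
          = s1 ++ (a :: (s2 ++ (List.replicate m s).flatten)) := by
        rw [List.replicate_succ, List.flatten_cons, hs]
        simp
      rw [heq]
      exact h2.trans (List.sublist_append_right _ _)

lemma sum_count_eq_length_filter [DecidableEq α] (c : List α) (S : Finset α) :
    ∑ a ∈ S, c.count a = (c.filter (fun a => a ∈ S)).length := by
  induction c with
  | nil => simp
  | cons b c ih =>
    rw [List.filter_cons]
    have h : ∑ a ∈ S, List.count a (b :: c)
        = (∑ a ∈ S, List.count a c) + (if b ∈ S then 1 else 0) := by
      rw [← Finset.sum_ite_eq' S b (fun _ => 1), ← Finset.sum_add_distrib]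
      exact Finset.sum_congr rfl (fun a _ => by
        rw [List.count_cons]
        congr 1
        exact if_congr (by simp only [beq_iff_eq]; exact ⟨Eq.symm, Eq.symm⟩) rfl rfl)
    rw [h, ih]
    by_cases hb : b ∈ S <;> simp [hb]

/-- Pigeonhole: some `i`-subset captures at least an `i/q` fraction. -/
lemma pigeon (q i : ℕ) (hi1 : 1 ≤ i) (hi : i ≤ q) (f : Fin q → ℕ) :
    ∃ S : Finset (Fin q), S.card = i ∧ (∑ a, f a) * i ≤ q * ∑ a ∈ S, f a := by
  classical
  have hP : (Finset.powersetCard i (Finset.univ : Finset (Fin q))).Nonempty := by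
    rw [Finset.powersetCard_nonempty]
    simpa using hi
  obtain ⟨S, hSP, hmax⟩ := Finset.exists_max_image _ (fun T => ∑ a ∈ T, f a) hP
  have hScard : S.card = i := (Finset.mem_powersetCard.mp hSP).2
  have hSne : S.Nonempty := Finset.card_pos.mp (by omega)
  obtain ⟨b, hbS, hbmin⟩ := Finset.exists_min_image S f hSne
  refine ⟨S, hScard, ?_⟩
  have hout : ∀ a ∉ S, f a ≤ f b := by
    intro a haS
    by_contra hlt
    push_neg at hlt
    have haE : a ∉ S.erase b := fun h => haS (Finset.mem_of_mem_erase h)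
    have hT : (insert a (S.erase b)) ∈ Finset.powersetCard i Finset.univ := by
      rw [Finset.mem_powersetCard]
      refine ⟨Finset.subset_univ _, ?_⟩
      rw [Finset.card_insert_of_notMem haE, Finset.card_erase_of_mem hbS]
      omega
    have hm := hmax _ hT
    rw [Finset.sum_insert haE] at hm
    have h1 : ∑ x ∈ S.erase b, f x + f b = ∑ x ∈ S, f x := Finset.sum_erase_add S f hbS
    simp only at hm h1
    omega
  obtain ⟨k, hk⟩ : ∃ k, q = i + k := ⟨q - i, by omega⟩
  have h2 : ∑ a ∈ Sᶜ, f a ≤ k * f b := by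
    calc ∑ a ∈ Sᶜ, f a ≤ ∑ _a ∈ Sᶜ, f b :=
          Finset.sum_le_sum (fun a ha => hout a (Finset.mem_compl.mp ha))
      _ = Sᶜ.card * f b := by rw [Finset.sum_const, smul_eq_mul]
      _ = k * f b := by rw [Finset.card_compl, hScard]; simp; omega
  have h3 : i * f b ≤ ∑ a ∈ S, f a := by
    calc i * f b = ∑ _a ∈ S, f b := by rw [Finset.sum_const, smul_eq_mul, hScard]
      _ ≤ ∑ a ∈ S, f a := Finset.sum_le_sum (fun a ha => hbmin a ha)
  have h4 : ∑ a ∈ S, f a + ∑ a ∈ Sᶜ, f a = ∑ a, f a := Finset.sum_add_sum_compl S f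
  calc (∑ a, f a) * i ≤ (i + k) * ∑ a ∈ S, f a := by
        nlinarith [Nat.mul_le_mul_left i h2, Nat.mul_le_mul_left k h3]
    _ = q * ∑ a ∈ S, f a := by rw [← hk]

/-- For `δ = (q-i)/q` deletions and `γ = i(i-1)/q` insertions, any `q`-ary
list-decodable code (list size `L`) of block length `n` (with `q ∣ n`) has at most
`L·C(q,i)` codewords — hence no such positive-rate family exists. -/
theorem stmt6 (q i n L : ℕ) (hq : 2 ≤ q) (hi1 : 1 ≤ i) (hi2 : i ≤ q - 1)
    (hdvd : q ∣ n) (hn : 0 < n)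
    (δ γ : ℝ) (hδ : δ = ((q : ℝ) - i) / q) (hγ : γ = ((i : ℝ) * ((i : ℝ) - 1)) / q)
    (C : Finset (List (Fin q))) (hlen : ∀ c ∈ C, c.length = n)
    (hld : ∀ y : List (Fin q),
      Nat.card {c : List (Fin q) // c ∈ C ∧ ReachableR c y (δ * n) (γ * n)} ≤ L) :
    C.card ≤ L * q.choose i := by
  classical
  obtain ⟨t, ht⟩ := hdvd
  set m := i * t with hm
  have hiq : i ≤ q := by omega
  have hq0 : (0:ℝ) < q := by positivity
  have hqne : (q:ℝ) ≠ 0 := ne_of_gt hq0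
  set yf : Finset (Fin q) → List (Fin q) :=
    fun S => (List.replicate m (S.sort (· ≤ ·))).flatten with hyf
  set P := Finset.powersetCard i (Finset.univ : Finset (Fin q)) with hP
  have key : ∀ c ∈ C, ∃ S ∈ P, ReachableR c (yf S) (δ * n) (γ * n) := by
    intro c hc
    obtain ⟨S, hScard, hSsum⟩ := pigeon q i hi1 hiq (fun a => c.count a)
    have hsum_univ : ∑ a, c.count a = n := by
      rw [sum_count_eq_length_filter]
      simp [hlen c hc]
    rw [hsum_univ] at hSsum
    have hfl : m ≤ (c.filter (fun a => a ∈ S)).length := by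
      rw [← sum_count_eq_length_filter]
      have hqm : q * m ≤ q * ∑ a ∈ S, c.count a := by
        calc q * m = n * i := by rw [ht, hm]; ring
          _ ≤ _ := hSsum
      exact Nat.le_of_mul_le_mul_left hqm (by omega)
    refine ⟨S, Finset.mem_powersetCard.mpr ⟨Finset.subset_univ _, hScard⟩, ?_⟩
    set z := (c.filter (fun a => a ∈ S)).take m with hz
    have hzlen : z.length = m := by
      rw [hz, List.length_take]
      omega
    have hzc : z.Sublist c := (List.take_sublist _ _).trans List.filter_sublist
    have hzy : z.Sublist (yf S) := by
      apply sublist_flatten_replicate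
      · intro a ha
        have hmem := List.mem_of_mem_take ha
        rw [List.mem_filter] at hmem
        simpa [Finset.mem_sort] using hmem.2
      · omega
    have hylen : (yf S).length = m * i := by
      simp [hyf, Finset.length_sort, hScard]
    refine ⟨z, hzc, hzy, ?_, ?_⟩
    · rw [hlen c hc, hzlen, hδ, ht, hm]
      push_cast
      exact le_of_eq (by field_simp)
    · rw [hylen, hzlen, hγ, ht, hm]
      push_cast
      exact le_of_eq (by field_simp)
  choose! Sel hSmem hSR using key
  have hfib : C.card = ∑ S ∈ P, (C.filter (fun c => Sel c = S)).card :=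
    Finset.card_eq_sum_card_fiberwise hSmem
  have hfibL : ∀ S ∈ P, (C.filter (fun c => Sel c = S)).card ≤ L := by
    intro S _
    have hsub : C.filter (fun c => Sel c = S) ⊆
        C.filter (fun c => ReachableR c (yf S) (δ * n) (γ * n)) := by
      intro c hc
      rw [Finset.mem_filter] at hc ⊢
      exact ⟨hc.1, hc.2 ▸ hSR c hc.1⟩
    have hcard : (C.filter (fun c => ReachableR c (yf S) (δ * n) (γ * n))).card =
        Nat.card {c : List (Fin q) // c ∈ C ∧ ReachableR c (yf S) (δ * n) (γ * n)} := by
      have e : {c : List (Fin q) // c ∈ C ∧ ReachableR c (yf S) (δ * n) (γ * n)} ≃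
          {c : List (Fin q) //
            c ∈ C.filter (fun c => ReachableR c (yf S) (δ * n) (γ * n))} :=
        Equiv.subtypeEquivRight (fun c => by simp)
      rw [Nat.card_congr e, Nat.card_eq_fintype_card, Fintype.card_coe]
    calc (C.filter (fun c => Sel c = S)).card ≤ _ := Finset.card_le_card hsub
      _ = _ := hcard
      _ ≤ L := hld (yf S)
  calc C.card = ∑ S ∈ P, (C.filter (fun c => Sel c = S)).card := hfib
    _ ≤ ∑ _S ∈ P, L := Finset.sum_le_sum hfibL
    _ = P.card * L := by rw [Finset.sum_const, smul_eq_mul]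
    _ = L * q.choose i := by
        rw [hP, Finset.card_powersetCard]
        simp [Nat.mul_comm]
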